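/- arXiv:2306.04278 — 2 statements merged into one kernel-verified Lean document; each statement's English description precedes it below -/
import Mathlib

section
/- The relation ≺ on [0,1] is a strict partial order: it is irreflexive, asymmetric, and transitive. -/
open MeasureTheory

/-- `I(x,y) = (min(x,y), max(x,y)]`. -/
def gapInterval (x y : ℝ) : Set ℝ := Set.Ioc (min x y) (max x y)

/-- `i(x,y) = inf { j ≥ 1 : u_j ∈ I(x,y) } ∈ ℕ ∪ {∞}` (with `inf ∅ = ⊤`). -/
noncomputable def firstIdx (u : ℕ → ℝ) (x y : ℝ) : ℕ∞ :=
  sInf ((fun j : ℕ => (j : ℕ∞)) '' {j : ℕ | 1 ≤ j ∧ u j ∈ gapInterval x y})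

/-- `x ≺ y` iff `i(x,y) < ∞` and `(y − x) · s_{i(x,y)} > 0`. -/
def Prec (u s : ℕ → ℝ) (x y : ℝ) : Prop :=
  ∃ j : ℕ, firstIdx u x y = (j : ℕ∞) ∧ (y - x) * s j > 0

lemma gapInterval_comm (x y : ℝ) : gapInterval x y = gapInterval y x := by
  simp [gapInterval, min_comm, max_comm]

lemma mem_gapInterval {t x y : ℝ} :
    t ∈ gapInterval x y ↔ (x < t ∧ t ≤ y) ∨ (y < t ∧ t ≤ x) := by
  simp only [gapInterval, Set.mem_Ioc, min_lt_iff, le_max_iff]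
  constructor
  · rintro ⟨h1 | h1, h2 | h2⟩
    · exact absurd h2 h1.not_ge
    · exact Or.inl ⟨h1, h2⟩
    · exact Or.inr ⟨h1, h2⟩
    · exact absurd h2 h1.not_ge
  · rintro (⟨h1, h2⟩ | ⟨h1, h2⟩)
    · exact ⟨Or.inl h1, Or.inr h2⟩
    · exact ⟨Or.inr h1, Or.inl h2⟩

lemma mem_gap_iff_ne {t x y : ℝ} : t ∈ gapInterval x y ↔ ¬ (t ≤ x ↔ t ≤ y) := by
  rw [mem_gapInterval]
  constructor
  · rintro (⟨h1, h2⟩ | ⟨h1, h2⟩) hiff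
    · exact h1.not_ge (hiff.mpr h2)
    · exact h1.not_ge (hiff.mp h2)
  · intro h
    by_cases ha : t ≤ x <;> by_cases hb : t ≤ y
    · exact absurd (iff_of_true ha hb) h
    · exact Or.inr ⟨not_le.mp hb, ha⟩
    · exact Or.inl ⟨not_le.mp ha, hb⟩
    · exact absurd (iff_of_false ha hb) h

lemma gap_xor {t x y z : ℝ} :
    t ∈ gapInterval x z ↔ ¬ ((t ∈ gapInterval x y) ↔ (t ∈ gapInterval y z)) := by
  simp only [mem_gap_iff_ne]; tauto

lemma firstIdx_eq_coe_iff {u : ℕ → ℝ} {x y : ℝ} {j : ℕ} :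
    firstIdx u x y = (j : ℕ∞) ↔
      1 ≤ j ∧ u j ∈ gapInterval x y ∧ ∀ m, 1 ≤ m → u m ∈ gapInterval x y → j ≤ m := by
  set S : Set ℕ := {m : ℕ | 1 ≤ m ∧ u m ∈ gapInterval x y} with hSdef
  constructor
  · intro h
    have hS : S.Nonempty := by
      by_contra hne
      rw [Set.not_nonempty_iff_eq_empty] at hne
      rw [firstIdx, show {j : ℕ | 1 ≤ j ∧ u j ∈ gapInterval x y} = S from rfl, hne] at h
      simp at h
    have hmem : sInf S ∈ S := Nat.sInf_mem hS
    have hcoe : firstIdx u x y = ((sInf S : ℕ) : ℕ∞) := by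
      apply le_antisymm
      · exact sInf_le ⟨sInf S, hmem, rfl⟩
      · apply le_sInf
        rintro a ⟨m, hm, rfl⟩
        exact Nat.cast_le.mpr (Nat.sInf_le hm)
    rw [hcoe] at h
    have hj : sInf S = j := by exact_mod_cast h
    refine ⟨?_, ?_, ?_⟩
    · rw [← hj]; exact hmem.1
    · rw [← hj]; exact hmem.2
    · intro m hm1 hm2
      rw [← hj]
      exact Nat.sInf_le ⟨hm1, hm2⟩
  · rintro ⟨h1, h2, h3⟩
    apply le_antisymm
    · exact sInf_le ⟨j, ⟨h1, h2⟩, rfl⟩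
    · apply le_sInf
      rintro a ⟨m, ⟨hm1, hm2⟩, rfl⟩
      exact Nat.cast_le.mpr (h3 m hm1 hm2)

/-- the relation `≺` is a strict partial order on `[0,1]`:
irreflexive, asymmetric and transitive. -/
theorem prec_isStrictPartialOrder
    (u s : ℕ → ℝ)
    (hu : ∀ j, 1 ≤ j → u j ∈ Set.Ioo (0:ℝ) 1)
    (hs : ∀ j, 1 ≤ j → s j = 1 ∨ s j = -1) :
    (∀ x ∈ Set.Icc (0:ℝ) 1, ¬ Prec u s x x) ∧
    (∀ x ∈ Set.Icc (0:ℝ) 1, ∀ y ∈ Set.Icc (0:ℝ) 1, Prec u s x y → ¬ Prec u s y x) ∧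
    (∀ x ∈ Set.Icc (0:ℝ) 1, ∀ y ∈ Set.Icc (0:ℝ) 1, ∀ z ∈ Set.Icc (0:ℝ) 1,
      Prec u s x y → Prec u s y z → Prec u s x z) := by
  refine ⟨?_, ?_, ?_⟩
  · rintro x _ ⟨j, _, hjs⟩
    simp at hjs
  · rintro x _ y _ ⟨j, hj, hjs⟩ ⟨k, hk, hks⟩
    have hsym : firstIdx u y x = firstIdx u x y := by
      rw [firstIdx, firstIdx, gapInterval_comm]
    rw [hsym, hj] at hk
    have hjk : j = k := by exact_mod_cast hk
    rw [← hjk] at hks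
    have : (y - x) * s j + (x - y) * s j = 0 := by ring
    linarith
  · rintro x _ y _ z _ ⟨j, hj, hjs⟩ ⟨k, hk, hks⟩
    rw [firstIdx_eq_coe_iff] at hj hk
    obtain ⟨hj1, hjm, hjmin⟩ := hj
    obtain ⟨hk1, hkm, hkmin⟩ := hk
    rcases lt_trichotomy j k with hlt | heq | hgt
    · -- firstIdx u x z = j
      have hjnot : u j ∉ gapInterval y z := fun h => absurd (hkmin j hj1 h) (by omega)
      have hjz : u j ∈ gapInterval x z := gap_xor.mpr (by tauto)
      refine ⟨j, firstIdx_eq_coe_iff.mpr ⟨hj1, hjz, ?_⟩, ?_⟩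
      · intro m hm1 hm2
        by_contra hc
        push_neg at hc
        have h1 : u m ∉ gapInterval x y := fun h => absurd (hjmin m hm1 h) (by omega)
        have h2 : u m ∉ gapInterval y z := fun h => absurd (hkmin m hm1 h) (by omega)
        exact (gap_xor.mp hm2) (by tauto)
      · -- sign: (z - x) * s j > 0
        rcases hs j hj1 with h1 | h1
        · rw [h1, mul_one] at hjs ⊢
          by_contra hc
          push_neg at hc
          rcases eq_or_lt_of_le hc with he | hl
          · have hxz : z = x := by linarith
            rw [hxz, mem_gapInterval] at hjz
            rcases hjz with ⟨a, b⟩ | ⟨a, b⟩ <;> linarith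
          · -- z < x < y, so gapInterval x y ⊆ gapInterval y z, contradicting j < k
            rw [mem_gapInterval] at hjm
            have : u j ∈ gapInterval y z := by
              rw [mem_gapInterval]
              rcases hjm with ⟨a, b⟩ | ⟨a, b⟩ <;> [right; linarith] <;> constructor <;> linarith
            exact hjnot this
        · rw [h1] at hjs ⊢
          by_contra hc
          push_neg at hc
          have hyx : y < x := by nlinarith
          have hzx : x ≤ z := by nlinarith
          rcases eq_or_lt_of_le hzx with he | hl
          · rw [he] at hjz
            rw [mem_gapInterval] at hjz
            rcases hjz with ⟨a, b⟩ | ⟨a, b⟩ <;> linarith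
          · rw [mem_gapInterval] at hjm
            have : u j ∈ gapInterval y z := by
              rw [mem_gapInterval]
              rcases hjm with ⟨a, b⟩ | ⟨a, b⟩ <;> [linarith; left] <;> constructor <;> linarith
            exact hjnot this
    · -- j = k : contradiction, the two intervals are disjoint
      exfalso
      rw [heq] at hjs
      rcases hs k hk1 with h1 | h1 <;> rw [h1] at hjs hks <;>
        rw [heq, mem_gapInterval] at hjm <;> rw [mem_gapInterval] at hkm <;>
        rcases hjm with ⟨a, b⟩ | ⟨a, b⟩ <;> rcases hkm with ⟨c, d⟩ | ⟨c, d⟩ <;> nlinarith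
    · -- k < j : firstIdx u x z = k
      have hknot : u k ∉ gapInterval x y := fun h => absurd (hjmin k hk1 h) (by omega)
      have hkz : u k ∈ gapInterval x z := gap_xor.mpr (by tauto)
      refine ⟨k, firstIdx_eq_coe_iff.mpr ⟨hk1, hkz, ?_⟩, ?_⟩
      · intro m hm1 hm2
        by_contra hc
        push_neg at hc
        have h1 : u m ∉ gapInterval x y := fun h => absurd (hjmin m hm1 h) (by omega)
        have h2 : u m ∉ gapInterval y z := fun h => absurd (hkmin m hm1 h) (by omega)
        exact (gap_xor.mp hm2) (by tauto)
      · rcases hs k hk1 with h1 | h1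
        · rw [h1, mul_one] at hks ⊢
          by_contra hc
          push_neg at hc
          rcases eq_or_lt_of_le hc with he | hl
          · have hxz : z = x := by linarith
            rw [hxz, mem_gapInterval] at hkz
            rcases hkz with ⟨a, b⟩ | ⟨a, b⟩ <;> linarith
          · -- z < x, z > y so y < z < x : gapInterval y z ⊆ gapInterval x y
            rw [mem_gapInterval] at hkm
            have : u k ∈ gapInterval x y := by
              rw [mem_gapInterval]
              rcases hkm with ⟨a, b⟩ | ⟨a, b⟩ <;> [right; linarith] <;> constructor <;> linarith
            exact hknot this
        · rw [h1] at hks ⊢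
          by_contra hc
          push_neg at hc
          have hzy : z < y := by nlinarith
          have hxz : x ≤ z := by nlinarith
          rcases eq_or_lt_of_le hxz with he | hl
          · rw [he] at hkz
            rw [mem_gapInterval] at hkz
            rcases hkz with ⟨a, b⟩ | ⟨a, b⟩ <;> linarith
          · -- x < z < y : gapInterval y z ⊆ gapInterval x y
            rw [mem_gapInterval] at hkm
            have : u k ∈ gapInterval x y := by
              rw [mem_gapInterval]
              rcases hkm with ⟨a, b⟩ | ⟨a, b⟩ <;> [linarith; left] <;> constructor <;> linarith
            exact hknot this
end

section
/- Assume the u_j are pairwise distinct. Then for all x, y ∈ [0,1] and every integer k ≥ 0: (i) i(x,y) > k if and only if φ_k(x) = φ_k(y); (ii) (x ≺ y and i(x,y) ≤ k) if and only if φ_k(x) < φ_k(y). -/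
open MeasureTheory

/-- `φ_k(x) = Leb({ y ∈ [0,1] : y ≺ x and i(x,y) ≤ k })`. -/
noncomputable def phiK (u s : ℕ → ℝ) (k : ℕ) (x : ℝ) : ℝ :=
  (volume {y : ℝ | y ∈ Set.Icc (0:ℝ) 1 ∧ Prec u s y x ∧ firstIdx u x y ≤ (k : ℕ∞)}).toReal

lemma mem_gap {v a b : ℝ} :
    v ∈ gapInterval a b ↔ (a < v ∧ v ≤ b) ∨ (b < v ∧ v ≤ a) := by
  rw [gapInterval, Set.mem_Ioc, min_lt_iff, le_max_iff]
  constructor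
  · rintro ⟨h1 | h1, h2 | h2⟩
    · exact absurd h2 (not_le.mpr h1)
    · exact Or.inl ⟨h1, h2⟩
    · exact Or.inr ⟨h1, h2⟩
    · exact absurd h2 (not_le.mpr h1)
  · rintro (⟨h1, h2⟩ | ⟨h1, h2⟩)
    · exact ⟨Or.inl h1, Or.inr h2⟩
    · exact ⟨Or.inr h1, Or.inl h2⟩

lemma gap_symm (a b : ℝ) : gapInterval a b = gapInterval b a := by
  rw [gapInterval, gapInterval, min_comm, max_comm]

lemma mem_gap_xor {v a b : ℝ} :
    v ∈ gapInterval a b ↔ ((a < v) ↔ ¬ (b < v)) := by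
  rw [mem_gap]
  constructor
  · rintro (⟨h1, h2⟩ | ⟨h1, h2⟩)
    · exact ⟨fun _ => not_lt.mpr h2, fun _ => h1⟩
    · constructor
      · intro h; exact absurd h2 (not_le.mpr h)
      · intro h; exact absurd h1 h
  · intro h
    by_cases ha : a < v
    · exact Or.inl ⟨ha, not_lt.mp (h.mp ha)⟩
    · have hb : b < v := by
        by_contra hb
        exact ha (h.mpr hb)
      exact Or.inr ⟨hb, not_lt.mp ha⟩

lemma gap_mem_left {v a b c : ℝ} (h1 : v ∈ gapInterval a b) (h2 : v ∉ gapInterval b c) :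
    v ∈ gapInterval a c := by
  rw [mem_gap_xor] at *
  tauto

lemma gap_mem_right {v a b c : ℝ} (h1 : v ∉ gapInterval a b) (h2 : v ∈ gapInterval b c) :
    v ∈ gapInterval a c := by
  rw [mem_gap_xor] at *
  tauto

lemma gap_not {v a b c : ℝ} (h1 : v ∉ gapInterval a b) (h2 : v ∉ gapInterval b c) :
    v ∉ gapInterval a c := by
  rw [mem_gap_xor] at *
  tauto
lemma firstIdx_eq_coe (u : ℕ → ℝ) (x y : ℝ)
    (h : {j : ℕ | 1 ≤ j ∧ u j ∈ gapInterval x y}.Nonempty) :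
    firstIdx u x y = (sInf {j : ℕ | 1 ≤ j ∧ u j ∈ gapInterval x y} : ℕ) := by
  apply le_antisymm
  · exact sInf_le ⟨_, Nat.sInf_mem h, rfl⟩
  · apply le_sInf
    rintro b ⟨j, hj, rfl⟩
    show ((sInf {j : ℕ | 1 ≤ j ∧ u j ∈ gapInterval x y} : ℕ) : ℕ∞) ≤ (j : ℕ∞)
    exact_mod_cast Nat.sInf_le hj

lemma firstIdx_eq_top (u : ℕ → ℝ) (x y : ℝ)
    (h : ∀ j : ℕ, 1 ≤ j → u j ∉ gapInterval x y) : firstIdx u x y = ⊤ := by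
  have he : {j : ℕ | 1 ≤ j ∧ u j ∈ gapInterval x y} = ∅ := by
    ext j
    simp only [Set.mem_setOf_eq, Set.mem_empty_iff_false, iff_false, not_and]
    exact h j
  rw [firstIdx, he, Set.image_empty, sInf_empty]

lemma firstIdx_le_iff (u : ℕ → ℝ) (x y : ℝ) (k : ℕ) :
    firstIdx u x y ≤ (k : ℕ∞) ↔ ∃ j, 1 ≤ j ∧ j ≤ k ∧ u j ∈ gapInterval x y := by
  constructor
  · intro h
    by_cases hne : {j : ℕ | 1 ≤ j ∧ u j ∈ gapInterval x y}.Nonempty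
    · rw [firstIdx_eq_coe u x y hne] at h
      have hk : sInf {j : ℕ | 1 ≤ j ∧ u j ∈ gapInterval x y} ≤ k := by exact_mod_cast h
      obtain ⟨h1, h2⟩ := Nat.sInf_mem hne
      exact ⟨_, h1, hk, h2⟩
    · exfalso
      rw [firstIdx_eq_top u x y (fun j hj hm => hne ⟨j, hj, hm⟩)] at h
      exact absurd h (by simp)
  · rintro ⟨j, h1, h2, h3⟩
    calc firstIdx u x y ≤ (j : ℕ∞) := sInf_le ⟨j, ⟨h1, h3⟩, rfl⟩
      _ ≤ (k : ℕ∞) := by exact_mod_cast h2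

lemma lt_firstIdx_iff (u : ℕ → ℝ) (x y : ℝ) (k : ℕ) :
    (k : ℕ∞) < firstIdx u x y ↔ ∀ j, 1 ≤ j → j ≤ k → u j ∉ gapInterval x y := by
  rw [← not_le, firstIdx_le_iff]
  push_neg
  tauto

lemma firstIdx_symm (u : ℕ → ℝ) (x y : ℝ) : firstIdx u x y = firstIdx u y x := by
  rw [firstIdx, firstIdx, gap_symm]

/-- `x ≺ y` and `i(x,y) ≤ k`, unfolded. -/
def Qrel (u s : ℕ → ℝ) (k : ℕ) (a b : ℝ) : Prop :=
  ∃ j : ℕ, 1 ≤ j ∧ j ≤ k ∧ u j ∈ gapInterval a b ∧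
    (∀ i, 1 ≤ i → i < j → u i ∉ gapInterval a b) ∧ (b - a) * s j > 0

lemma prec_iff_Q (u s : ℕ → ℝ) (k : ℕ) (a b : ℝ) :
    (Prec u s a b ∧ firstIdx u a b ≤ (k : ℕ∞)) ↔ Qrel u s k a b := by
  constructor
  · rintro ⟨⟨j, hj, hsgn⟩, hle⟩
    have hne : {i : ℕ | 1 ≤ i ∧ u i ∈ gapInterval a b}.Nonempty := by
      by_contra h
      rw [firstIdx_eq_top u a b (fun i hi hm => h ⟨i, hi, hm⟩)] at hj
      exact absurd hj (by simp)
    have he := firstIdx_eq_coe u a b hne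
    have hjs : sInf {i : ℕ | 1 ≤ i ∧ u i ∈ gapInterval a b} = j := by
      rw [he] at hj; exact_mod_cast hj
    obtain ⟨h1, h2⟩ := Nat.sInf_mem hne
    rw [hjs] at h1 h2
    refine ⟨j, h1, ?_, h2, ?_, hsgn⟩
    · rw [hj] at hle; exact_mod_cast hle
    · intro i hi1 hij hm
      have hsle := Nat.sInf_le (show i ∈ {i : ℕ | 1 ≤ i ∧ u i ∈ gapInterval a b} from ⟨hi1, hm⟩)
      omega
  · rintro ⟨j, h1, hk, hG, hmin, hsgn⟩
    have hjmem : j ∈ {i : ℕ | 1 ≤ i ∧ u i ∈ gapInterval a b} := ⟨h1, hG⟩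
    have hne : {i : ℕ | 1 ≤ i ∧ u i ∈ gapInterval a b}.Nonempty := ⟨j, hjmem⟩
    have he := firstIdx_eq_coe u a b hne
    have hinf : sInf {i : ℕ | 1 ≤ i ∧ u i ∈ gapInterval a b} = j := by
      have hmem := Nat.sInf_mem hne
      have hle := Nat.sInf_le hjmem
      rcases lt_or_eq_of_le hle with hlt | heq
      · exact absurd hmem.2 (hmin _ hmem.1 hlt)
      · exact heq
    rw [hinf] at he
    refine ⟨⟨j, he, hsgn⟩, ?_⟩
    rw [he]; exact_mod_cast hk

lemma sgn1 {S a b c v : ℝ} (hS : S = 1 ∨ S = -1) (h1 : v ∈ gapInterval a b)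
    (h2 : (b - a) * S > 0) (h3 : v ∈ gapInterval c b) : (b - c) * S > 0 := by
  rw [mem_gap] at h1 h3
  rcases hS with rfl | rfl <;>
    rcases h1 with ⟨p1, p2⟩ | ⟨p1, p2⟩ <;> rcases h3 with ⟨q1, q2⟩ | ⟨q1, q2⟩ <;> nlinarith

lemma sgn2 {S a b c v : ℝ} (hS : S = 1 ∨ S = -1) (h1 : v ∈ gapInterval a b)
    (h2 : (b - a) * S > 0) (h3 : v ∈ gapInterval a c) : (c - a) * S > 0 := by
  rw [mem_gap] at h1 h3
  rcases hS with rfl | rfl <;>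
    rcases h1 with ⟨p1, p2⟩ | ⟨p1, p2⟩ <;> rcases h3 with ⟨q1, q2⟩ | ⟨q1, q2⟩ <;> nlinarith

lemma Q_trans {u s : ℕ → ℝ} {k : ℕ} (hs : ∀ j, 1 ≤ j → s j = 1 ∨ s j = -1)
    {x y z : ℝ} (hzx : Qrel u s k z x) (hxy : Qrel u s k x y) : Qrel u s k z y := by
  obtain ⟨m, hm1, hmk, hmG, hmmin, hmsgn⟩ := hzx
  obtain ⟨j, hj1, hjk, hjG, hjmin, hjsgn⟩ := hxy
  rcases lt_trichotomy m j with h | h | h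
  · have hnot : u m ∉ gapInterval x y := hjmin m hm1 h
    have hGzy : u m ∈ gapInterval z y := gap_mem_left hmG hnot
    refine ⟨m, hm1, hmk, hGzy, ?_, sgn2 (hs m hm1) hmG hmsgn hGzy⟩
    intro i hi1 him hmem
    exact gap_not (hmmin i hi1 him) (hjmin i hi1 (him.trans h)) hmem
  · exfalso
    subst h
    rw [mem_gap] at hmG hjG
    rcases hs m hm1 with h1 | h1 <;> rw [h1] at hmsgn hjsgn <;>
      rcases hmG with ⟨p1, p2⟩ | ⟨p1, p2⟩ <;> rcases hjG with ⟨q1, q2⟩ | ⟨q1, q2⟩ <;> nlinarith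
  · have hnot : u j ∉ gapInterval z x := hmmin j hj1 h
    have hGzy : u j ∈ gapInterval z y := gap_mem_right hnot hjG
    refine ⟨j, hj1, hjk, hGzy, ?_, sgn1 (hs j hj1) hjG hjsgn hGzy⟩
    intro i hi1 hij hmem
    exact gap_not (hmmin i hi1 (hij.trans h)) (hjmin i hi1 hij) hmem

lemma Q_samecell {u s : ℕ → ℝ} {k : ℕ} (hs : ∀ j, 1 ≤ j → s j = 1 ∨ s j = -1)
    {x y z : ℝ} (hxy : ∀ j, 1 ≤ j → j ≤ k → u j ∉ gapInterval x y)
    (hzx : Qrel u s k z x) : Qrel u s k z y := by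
  obtain ⟨j, h1, hk, hG, hmin, hsgn⟩ := hzx
  have hn : u j ∉ gapInterval x y := hxy j h1 hk
  have hGzy : u j ∈ gapInterval z y := gap_mem_left hG hn
  refine ⟨j, h1, hk, hGzy, ?_, sgn2 (hs j h1) hG hsgn hGzy⟩
  intro i hi1 hij hm
  exact gap_not (hmin i hi1 hij) (hxy i hi1 (le_of_lt (lt_of_lt_of_le hij hk))) hm

lemma Q_cell_into {u s : ℕ → ℝ} {k : ℕ} (hs : ∀ j, 1 ≤ j → s j = 1 ∨ s j = -1)
    {x y z : ℝ} (hxz : ∀ j, 1 ≤ j → j ≤ k → u j ∉ gapInterval x z)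
    (hxy : Qrel u s k x y) : Qrel u s k z y := by
  obtain ⟨j, h1, hk, hG, hmin, hsgn⟩ := hxy
  have hn : u j ∉ gapInterval z x := by rw [gap_symm]; exact hxz j h1 hk
  have hGzy : u j ∈ gapInterval z y := gap_mem_right hn hG
  refine ⟨j, h1, hk, hGzy, ?_, sgn1 (hs j h1) hG hsgn hGzy⟩
  intro i hi1 hij hm
  have hi' : u i ∉ gapInterval z x := by
    rw [gap_symm]; exact hxz i hi1 (le_of_lt (lt_of_lt_of_le hij hk))
  exact gap_not hi' (hmin i hi1 hij) hm

lemma Q_total {u s : ℕ → ℝ} {k : ℕ} (hs : ∀ j, 1 ≤ j → s j = 1 ∨ s j = -1)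
    {x y : ℝ} (h : firstIdx u x y ≤ (k : ℕ∞)) : Qrel u s k x y ∨ Qrel u s k y x := by
  obtain ⟨j, hj1, hjk, hjG⟩ := (firstIdx_le_iff u x y k).mp h
  set E := {i : ℕ | 1 ≤ i ∧ u i ∈ gapInterval x y} with hE
  have hne : E.Nonempty := ⟨j, hj1, hjG⟩
  obtain ⟨hm1, hmG⟩ := Nat.sInf_mem hne
  have hmk : sInf E ≤ k := le_trans (Nat.sInf_le ⟨hj1, hjG⟩) hjk
  have hmin : ∀ i, 1 ≤ i → i < sInf E → u i ∉ gapInterval x y := by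
    intro i hi1 him hm
    have := Nat.sInf_le (show i ∈ E from ⟨hi1, hm⟩)
    omega
  have hxny : x < y ∨ y < x := by
    rw [mem_gap] at hmG
    rcases hmG with ⟨p1, p2⟩ | ⟨p1, p2⟩
    · exact Or.inl (lt_of_lt_of_le p1 p2)
    · exact Or.inr (lt_of_lt_of_le p1 p2)
  have hsne : (y - x) * s (sInf E) ≠ 0 := by
    rcases hs _ hm1 with h1 | h1 <;> rw [h1] <;> rcases hxny with h2 | h2 <;> nlinarith
  rcases lt_or_gt_of_ne hsne with hneg | hpos
  · right
    refine ⟨sInf E, hm1, hmk, ?_, ?_, by nlinarith⟩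
    · rw [gap_symm]; exact hmG
    · intro i hi1 hij
      rw [gap_symm]; exact hmin i hi1 hij
  · exact Or.inl ⟨sInf E, hm1, hmk, hmG, hmin, hpos⟩

lemma cell_pos {u : ℕ → ℝ} (hu : ∀ j, 1 ≤ j → u j ∈ Set.Ioo (0:ℝ) 1) (k : ℕ)
    {x : ℝ} (hx : x ∈ Set.Icc (0:ℝ) 1) :
    ∃ J : Set ℝ, MeasurableSet J ∧ 0 < volume J ∧
      ∀ z ∈ J, z ∈ Set.Icc (0:ℝ) 1 ∧ ∀ j, 1 ≤ j → j ≤ k → u j ∉ gapInterval x z := by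
  classical
  set P : Finset ℝ := insert 0 (((Finset.Icc 1 k).filter (fun j => u j ≤ x)).image u) with hP
  set Qf : Finset ℝ := insert 1 (((Finset.Icc 1 k).filter (fun j => x < u j)).image u) with hQf
  have hPne : P.Nonempty := ⟨0, Finset.mem_insert_self _ _⟩
  have hQne : Qf.Nonempty := ⟨1, Finset.mem_insert_self _ _⟩
  set p := P.max' hPne with hp
  set q := Qf.min' hQne with hq
  have hPmem : ∀ b ∈ P, b ≤ x ∧ b < 1 ∧ 0 ≤ b ∨ b = 0 := by
    intro b hb
    rcases Finset.mem_insert.mp hb with rfl | hb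
    · exact Or.inr rfl
    · obtain ⟨j, hj, rfl⟩ := Finset.mem_image.mp hb
      obtain ⟨hjI, hjle⟩ := Finset.mem_filter.mp hj
      obtain ⟨hj1, _⟩ := Finset.mem_Icc.mp hjI
      obtain ⟨hu0, hu1⟩ := hu j hj1
      exact Or.inl ⟨hjle, hu1, le_of_lt hu0⟩
  have hp0 : 0 ≤ p := Finset.le_max' P 0 (Finset.mem_insert_self _ _)
  have hpx : p ≤ x := by
    apply Finset.max'_le
    intro b hb
    rcases hPmem b hb with ⟨h1, _, _⟩ | rfl
    · exact h1
    · exact hx.1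
  have hp1 : p < 1 := by
    have hpmem := Finset.max'_mem P hPne
    rcases hPmem p hpmem with ⟨_, h2, _⟩ | hz
    · exact h2
    · rw [hz]; norm_num
  have hQgt : ∀ b ∈ Qf, x < b ∨ b = 1 := by
    intro b hb
    rcases Finset.mem_insert.mp hb with rfl | hb
    · exact Or.inr rfl
    · obtain ⟨j, hj, rfl⟩ := Finset.mem_image.mp hb
      exact Or.inl (Finset.mem_filter.mp hj).2
  have hkey : p < min q 1 := by
    rcases lt_or_eq_of_le hx.2 with hx1 | hx1
    · apply lt_min
      · apply lt_of_le_of_lt hpx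
        have hqmem := Finset.min'_mem Qf hQne
        rcases hQgt q hqmem with h1 | h1
        · exact h1
        · rw [h1]; exact hx1
      · exact lt_of_le_of_lt hpx hx1
    · have hq1 : (1:ℝ) ≤ q := by
        apply Finset.le_min'
        intro b hb
        rcases hQgt b hb with h1 | h1
        · rw [← hx1]; exact le_of_lt h1
        · rw [h1]
      rw [min_eq_right]
      · exact hp1
      · exact hq1
  refine ⟨Set.Ioo p (min q 1), measurableSet_Ioo, ?_, ?_⟩
  · rw [Real.volume_Ioo]
    exact ENNReal.ofReal_pos.mpr (by linarith)
  · intro z hz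
    obtain ⟨hz1, hz2⟩ := hz
    have hz01 : z ∈ Set.Icc (0:ℝ) 1 :=
      ⟨le_of_lt (lt_of_le_of_lt hp0 hz1), le_of_lt (lt_of_lt_of_le hz2 (min_le_right _ _))⟩
    refine ⟨hz01, ?_⟩
    intro j hj1 hjk hm
    rw [mem_gap] at hm
    have hjI : j ∈ Finset.Icc 1 k := Finset.mem_Icc.mpr ⟨hj1, hjk⟩
    rcases hm with ⟨h1, h2⟩ | ⟨h1, h2⟩
    · have hmemQ : u j ∈ Qf := by
        apply Finset.mem_insert_of_mem
        exact Finset.mem_image.mpr ⟨j, Finset.mem_filter.mpr ⟨hjI, h1⟩, rfl⟩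
      have := Finset.min'_le Qf (u j) hmemQ
      have := min_le_left q 1
      linarith
    · have hmemP : u j ∈ P := by
        apply Finset.mem_insert_of_mem
        exact Finset.mem_image.mpr ⟨j, Finset.mem_filter.mpr ⟨hjI, h2⟩, rfl⟩
      have := Finset.le_max' P (u j) hmemP
      linarith

lemma phiK_eq_Q (u s : ℕ → ℝ) (k : ℕ) (a : ℝ) :
    phiK u s k a = (volume {z : ℝ | z ∈ Set.Icc (0:ℝ) 1 ∧ Qrel u s k z a}).toReal := by
  rw [phiK]
  congr 1
  apply congrArg
  ext z
  simp only [Set.mem_setOf_eq]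
  rw [firstIdx_symm u a z]
  exact and_congr_right fun _ => prec_iff_Q u s k z a

/-- if the `u_j` are pairwise distinct, then for all `x, y ∈ [0,1]` and `k ≥ 0`:
(i) `i(x,y) > k ↔ φ_k(x) = φ_k(y)`; (ii) `(x ≺ y ∧ i(x,y) ≤ k) ↔ φ_k(x) < φ_k(y)`. -/
theorem phiK_characterizes_firstIdx_and_prec
    (u s : ℕ → ℝ)
    (hu : ∀ j, 1 ≤ j → u j ∈ Set.Ioo (0:ℝ) 1)
    (hs : ∀ j, 1 ≤ j → s j = 1 ∨ s j = -1)
    (hdist : ∀ j k, 1 ≤ j → 1 ≤ k → u j = u k → j = k)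
    (x y : ℝ) (hx : x ∈ Set.Icc (0:ℝ) 1) (hy : y ∈ Set.Icc (0:ℝ) 1) (k : ℕ) :
    (((k : ℕ∞) < firstIdx u x y) ↔ phiK u s k x = phiK u s k y) ∧
    ((Prec u s x y ∧ firstIdx u x y ≤ (k : ℕ∞)) ↔ phiK u s k x < phiK u s k y) := by
  have hfin : ∀ a : ℝ, volume {z : ℝ | z ∈ Set.Icc (0:ℝ) 1 ∧ Qrel u s k z a} ≠ ⊤ := by
    intro a
    apply ne_top_of_le_ne_top (b := volume (Set.Icc (0:ℝ) 1))
    · rw [Real.volume_Icc]; exact ENNReal.ofReal_ne_top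
    · exact measure_mono fun z hz => hz.1
  have key_lt : ∀ a b : ℝ, a ∈ Set.Icc (0:ℝ) 1 → Qrel u s k a b →
      phiK u s k a < phiK u s k b := by
    intro a b ha hab
    obtain ⟨J, hJm, hJpos, hJsub⟩ := cell_pos hu k ha
    have hsub : {z : ℝ | z ∈ Set.Icc (0:ℝ) 1 ∧ Qrel u s k z a} ∪ J ⊆
        {z : ℝ | z ∈ Set.Icc (0:ℝ) 1 ∧ Qrel u s k z b} := by
      rintro z (⟨hz1, hz2⟩ | hzJ)
      · exact ⟨hz1, Q_trans hs hz2 hab⟩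
      · obtain ⟨hz1, hcell⟩ := hJsub z hzJ
        exact ⟨hz1, Q_cell_into hs hcell hab⟩
    have hdisj : Disjoint {z : ℝ | z ∈ Set.Icc (0:ℝ) 1 ∧ Qrel u s k z a} J := by
      rw [Set.disjoint_left]
      intro z hz hzJ
      obtain ⟨j, hj1, hjk, hjG, _, _⟩ := hz.2
      rw [gap_symm] at hjG
      exact (hJsub z hzJ).2 j hj1 hjk hjG
    have hunion : volume ({z : ℝ | z ∈ Set.Icc (0:ℝ) 1 ∧ Qrel u s k z a} ∪ J) =
        volume {z : ℝ | z ∈ Set.Icc (0:ℝ) 1 ∧ Qrel u s k z a} + volume J :=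
      measure_union hdisj hJm
    rw [phiK_eq_Q, phiK_eq_Q]
    rw [ENNReal.toReal_lt_toReal (hfin a) (hfin b)]
    calc volume {z : ℝ | z ∈ Set.Icc (0:ℝ) 1 ∧ Qrel u s k z a}
        < volume {z : ℝ | z ∈ Set.Icc (0:ℝ) 1 ∧ Qrel u s k z a} + volume J :=
          ENNReal.lt_add_right (hfin a) (ne_of_gt hJpos)
      _ = volume ({z : ℝ | z ∈ Set.Icc (0:ℝ) 1 ∧ Qrel u s k z a} ∪ J) := hunion.symm
      _ ≤ volume {z : ℝ | z ∈ Set.Icc (0:ℝ) 1 ∧ Qrel u s k z b} := measure_mono hsub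
  have key_eq : ∀ a b : ℝ, ((k : ℕ∞) < firstIdx u a b) → phiK u s k a = phiK u s k b := by
    intro a b hlt
    have hcond := (lt_firstIdx_iff u a b k).mp hlt
    have hcond' : ∀ j, 1 ≤ j → j ≤ k → u j ∉ gapInterval b a := by
      intro j h1 h2
      rw [gap_symm]
      exact hcond j h1 h2
    rw [phiK_eq_Q, phiK_eq_Q]
    congr 1
    apply congrArg
    ext z
    simp only [Set.mem_setOf_eq]
    exact and_congr_right fun _ =>
      ⟨fun h => Q_samecell hs hcond h, fun h => Q_samecell hs hcond' h⟩
  constructor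
  · constructor
    · exact fun h => key_eq x y h
    · intro h
      by_contra hlt
      rw [not_lt] at hlt
      rcases Q_total hs hlt with hQ | hQ
      · exact absurd h (ne_of_lt (key_lt x y hx hQ))
      · exact absurd h.symm (ne_of_lt (key_lt y x hy hQ))
  · rw [prec_iff_Q]
    constructor
    · exact fun hQ => key_lt x y hx hQ
    · intro h
      by_contra hq
      rcases le_or_gt (firstIdx u x y) (k : ℕ∞) with hle | hlt
      · rcases Q_total hs hle with hQ | hQ
        · exact hq hQ
        · exact absurd (key_lt y x hy hQ) (not_lt.mpr (le_of_lt h))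
      · exact absurd (key_eq x y hlt) (ne_of_lt h)
end
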